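/- Let an unambiguous complete product basis be given. Then its events satisfy pairwise exclusivity: for any two distinct events j ≠ j' there exists a party k such that x_k^j = x_k^{j'} and a_k^j ≠ a_k^{j'}. -/

import Mathlib

noncomputable section
open scoped BigOperators

/-- **Pairwise exclusivity** (Lemma B.2): the events of an unambiguous
complete product basis satisfy pairwise exclusivity: any two distinct events
agree on some party's setting while differing in that party's outcome. -/
theorem unambiguous_basis_pairwise_exclusivity
    -- `n` parties with local dimensions `d k`
    {n : ℕ} (hn : 1 ≤ n) (d : Fin n → ℕ) (hd : ∀ k, 1 ≤ d k)
    -- outcome sets `A k` with `|A k| = d k`, finite nonempty setting sets `X k`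
    (A : Fin n → Type) [∀ k, Fintype (A k)] [∀ k, DecidableEq (A k)]
    (hA : ∀ k, Fintype.card (A k) = d k)
    (X : Fin n → Type) [∀ k, Fintype (X k)] [∀ k, Nonempty (X k)]
    [∀ k, DecidableEq (X k)]
    -- local vectors `|(a_k|x_k)⟩`, an orthonormal basis for each setting
    (v : ∀ k : Fin n, X k → A k → EuclideanSpace ℂ (Fin (d k)))
    (hv : ∀ (k : Fin n) (x : X k), Orthonormal ℂ (v k x))
    -- `N = ∏_k d_k` pairwise distinct events with pairwise orthogonal
    -- product vectors (a complete product basis)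
    {N : ℕ} (hN : N = ∏ k, d k)
    (e : Fin N → (∀ k, A k) × (∀ k, X k))
    (he : Function.Injective e)
    (horth : ∀ j j' : Fin N, j ≠ j' →
      (∏ k : Fin n,
        (inner ℂ (v k ((e j).2 k) ((e j).1 k))
          (v k ((e j').2 k) ((e j').1 k)) : ℂ)) = 0)
    -- unambiguity: for labels occurring among the events, two distinct local
    -- vectors are orthogonal iff they belong to the same setting
    (hunamb : ∀ (k : Fin n) (a a' : A k) (x x' : X k),
      (∃ j, (e j).1 k = a ∧ (e j).2 k = x) →
      (∃ j, (e j).1 k = a' ∧ (e j).2 k = x') →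
      v k x a ≠ v k x' a' →
      ((inner ℂ (v k x a) (v k x' a') : ℂ) = 0 ↔ x = x'))
    :
    ∀ j j' : Fin N, j ≠ j' →
      ∃ k : Fin n, (e j).2 k = (e j').2 k ∧ (e j).1 k ≠ (e j').1 k := by
  intro j j' hjj
  obtain ⟨k, -, hk⟩ := Finset.prod_eq_zero_iff.mp (horth j j' hjj)
  have hne : v k ((e j).2 k) ((e j).1 k) ≠ v k ((e j').2 k) ((e j').1 k) := by
    intro h
    rw [h] at hk
    have h1 : (inner ℂ (v k ((e j').2 k) ((e j').1 k))
        (v k ((e j').2 k) ((e j').1 k)) : ℂ) = 1 := by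
      have := (hv k ((e j').2 k)).1 ((e j').1 k)
      rw [inner_self_eq_norm_sq_to_K, this]; norm_num
    rw [h1] at hk; exact one_ne_zero hk
  have hx : (e j).2 k = (e j').2 k :=
    (hunamb k ((e j).1 k) ((e j').1 k) ((e j).2 k) ((e j').2 k)
      ⟨j, rfl, rfl⟩ ⟨j', rfl, rfl⟩ hne).mp hk
  refine ⟨k, hx, fun ha => hne ?_⟩
  rw [hx, ha]

end
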